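/- For all natural numbers n, ∑_{j=0}^{n} j^2 · binomial(2n, n-j) = n · 2^(2n-2); equivalently, 4·∑_{j=0}^{n} j^2·binomial(2n, n-j) = n·4^n. -/

import Mathlib

open Finset

lemma l1 (m : ℕ) : 2 * ∑ k ∈ range (m+1), k * Nat.choose m k = m * 2 ^ m := by
  cases m with
  | zero => simp
  | succ m =>
    have h1 : ∑ k ∈ range (m+2), k * Nat.choose (m+1) k
        = ∑ k ∈ range (m+1), (m+1) * Nat.choose m k := by
      rw [Finset.sum_range_succ' (fun k => k * Nat.choose (m+1) k)]
      simp only [Nat.choose_zero_right, Nat.zero_mul, add_zero]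
      refine Finset.sum_congr rfl fun k _ => ?_
      rw [mul_comm (k+1), ← Nat.add_one_mul_choose_eq]
    rw [h1, ← Finset.mul_sum, Nat.sum_range_choose]
    ring

lemma l2 (m : ℕ) : 4 * ∑ k ∈ range (m+1), k^2 * Nat.choose m k = m * (m+1) * 2 ^ m := by
  cases m with
  | zero => simp
  | succ m =>
    have h1 : ∑ k ∈ range (m+2), k^2 * Nat.choose (m+1) k
        = ∑ k ∈ range (m+1), ((m+1) * (k * Nat.choose m k) + (m+1) * Nat.choose m k) := by
      rw [Finset.sum_range_succ' (fun k => k^2 * Nat.choose (m+1) k)]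
      simp only [Nat.choose_zero_right]
      have h0 : (0:ℕ)^2 * 1 = 0 := by ring
      rw [h0, add_zero]
      refine Finset.sum_congr rfl fun k _ => ?_
      have hk : (k+1) * Nat.choose (m+1) (k+1) = (m+1) * Nat.choose m k := by
        rw [mul_comm (k+1), ← Nat.add_one_mul_choose_eq]
      calc (k+1)^2 * Nat.choose (m+1) (k+1)
          = (k+1) * ((k+1) * Nat.choose (m+1) (k+1)) := by ring
        _ = (k+1) * ((m+1) * Nat.choose m k) := by rw [hk]
        _ = (m+1) * (k * Nat.choose m k) + (m+1) * Nat.choose m k := by ring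
    rw [h1, Finset.sum_add_distrib, ← Finset.mul_sum, ← Finset.mul_sum, Nat.sum_range_choose]
    have := l1 m
    calc 4 * ((m+1) * ∑ k ∈ range (m+1), k * Nat.choose m k + (m+1) * 2^m)
        = 2 * (m+1) * (2 * ∑ k ∈ range (m+1), k * Nat.choose m k) + 4 * ((m+1) * 2^m) := by
          ring
      _ = 2 * (m+1) * (m * 2^m) + 4 * ((m+1) * 2^m) := by rw [this]
      _ = (m+1) * (m+1+1) * 2^(m+1) := by ring

theorem sum_choose_B2 (n : ℕ) :
    4 * ∑ j ∈ Finset.range (n + 1), j ^ 2 * Nat.choose (2 * n) (n - j) =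
      n * 4 ^ n := by
  -- reflect the sum
  have hrefl : ∑ j ∈ range (n + 1), j ^ 2 * Nat.choose (2 * n) (n - j)
      = ∑ j ∈ range (n + 1), (n - j) ^ 2 * Nat.choose (2 * n) j := by
    rw [← Finset.sum_range_reflect (fun j => j ^ 2 * Nat.choose (2 * n) (n - j)) (n+1)]
    refine Finset.sum_congr rfl fun j hj => ?_
    have hj' : j ≤ n := Nat.lt_succ_iff.mp (Finset.mem_range.mp hj)
    have : n + 1 - 1 - j = n - j := by omega
    rw [this]
    have : n - (n - j) = j := by omega
    rw [this]
  rw [hrefl]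
  -- move to ℤ
  set g : ℕ → ℤ := fun k => ((k:ℤ) - n)^2 * Nat.choose (2*n) k with hg
  have hcast : ((∑ j ∈ range (n + 1), (n - j) ^ 2 * Nat.choose (2 * n) j : ℕ) : ℤ)
      = ∑ j ∈ range (n + 1), g j := by
    push_cast
    refine Finset.sum_congr rfl fun j hj => ?_
    have hj' : j ≤ n := Nat.lt_succ_iff.mp (Finset.mem_range.mp hj)
    rw [hg]
    have : ((n - j : ℕ) : ℤ) = (n : ℤ) - j := by
      omega
    rw [this]
    ring
  -- full sum T
  have hT : ∑ k ∈ range (2*n + 1), g k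
      = 2 * (∑ j ∈ range (n + 1), g j) - g n := by
    have hsplit : (2*n + 1) = (n + 1) + n := by ring
    rw [hsplit, Finset.sum_range_add]
    have h2 : ∑ i ∈ range n, g (n + 1 + i) = ∑ i ∈ range n, g (n - 1 - i) := by
      refine Finset.sum_congr rfl fun i hi => ?_
      have hi' : i < n := Finset.mem_range.mp hi
      rw [hg]
      simp only
      have hsym : Nat.choose (2*n) (n + 1 + i) = Nat.choose (2*n) (n - 1 - i) := by
        rw [← Nat.choose_symm (by omega : n + 1 + i ≤ 2*n)]
        congr 1
        omega
      rw [hsym]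
      have hc : ((n - 1 - i : ℕ) : ℤ) - n = -((n + 1 + i : ℕ) - (n:ℤ)) := by
        omega
      rw [hc]
      ring_nf
    rw [h2, Finset.sum_range_reflect (fun i => g i) n]
    rw [Finset.sum_range_succ]
    ring
  have hgn : g n = 0 := by rw [hg]; simp
  -- expand T
  have hexp : ∑ k ∈ range (2*n + 1), g k
      = (∑ k ∈ range (2*n + 1), (k:ℤ)^2 * Nat.choose (2*n) k)
        - 2*n * (∑ k ∈ range (2*n + 1), (k:ℤ) * Nat.choose (2*n) k)
        + (n:ℤ)^2 * (∑ k ∈ range (2*n + 1), (Nat.choose (2*n) k : ℤ)) := by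
    rw [Finset.mul_sum, Finset.mul_sum, ← Finset.sum_sub_distrib, ← Finset.sum_add_distrib]
    refine Finset.sum_congr rfl fun k _ => ?_
    rw [hg]; ring
  -- evaluate the three sums
  have e0 : (∑ k ∈ range (2*n + 1), (Nat.choose (2*n) k : ℤ)) = 4 ^ n := by
    rw [← Nat.cast_sum]
    rw [Nat.sum_range_choose]
    push_cast
    rw [pow_mul]
    norm_num
  have e1 : 2 * (∑ k ∈ range (2*n + 1), (k:ℤ) * Nat.choose (2*n) k) = 2*n * 4 ^ n := by
    have := l1 (2*n)
    have h := congrArg (fun x : ℕ => (x : ℤ)) this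
    push_cast at h
    rw [h]
    rw [pow_mul]
    norm_num
  have e2 : 4 * (∑ k ∈ range (2*n + 1), (k:ℤ)^2 * Nat.choose (2*n) k)
      = 2*n * (2*n+1) * 4 ^ n := by
    have := l2 (2*n)
    have h := congrArg (fun x : ℕ => (x : ℤ)) this
    push_cast at h
    rw [h]
    rw [pow_mul]
    norm_num
  -- combine
  have key : (4 : ℤ) * ∑ j ∈ range (n + 1), g j = n * 4 ^ n := by
    have h4T : 4 * ∑ k ∈ range (2*n + 1), g k = 2 * (n:ℤ) * 4 ^ n := by
      rw [hexp]
      linear_combination e2 - 4*(n:ℤ)*e1 + 4*(n:ℤ)^2*e0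
    rw [hT, hgn] at h4T
    linarith
  have final : ((4 * ∑ j ∈ range (n + 1), (n - j) ^ 2 * Nat.choose (2 * n) j : ℕ) : ℤ)
      = ((n * 4 ^ n : ℕ) : ℤ) := by
    calc ((4 * ∑ j ∈ range (n + 1), (n - j) ^ 2 * Nat.choose (2 * n) j : ℕ) : ℤ)
        = 4 * ((∑ j ∈ range (n + 1), (n - j) ^ 2 * Nat.choose (2 * n) j : ℕ) : ℤ) := by
          push_cast; ring
      _ = 4 * ∑ j ∈ range (n + 1), g j := by rw [hcast]
      _ = n * 4 ^ n := key
      _ = ((n * 4 ^ n : ℕ) : ℤ) := by push_cast; ring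
  exact_mod_cast final
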